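/- Let Φ be a root system of type A_{n−1} or C_n realized in ε-coordinates, let γ ∈ Φ, and let β_1, …, β_k ∈ Φ be pairwise strongly orthogonal roots with (β_i, γ) > 0 for all i. Then k ≤ 2; moreover, if k = 2 and the set {γ, β_1, β_2} contains roots of different lengths, then γ is a short root. -/

import Mathlib

open scoped Classical RealInnerProductSpace

/-- The pairing `⟨γ, α^∨⟩ = 2(γ,α)/(α,α)`. -/
noncomputable def pairing {V : Type*} [NormedAddCommGroup V] [InnerProductSpace ℝ V]
    (γ α : V) : ℝ :=
  2 * ⟪γ, α⟫ / ⟪α, α⟫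

/-- A finite (crystallographic, reduced) root system in a Euclidean space. -/
structure IsRootSystem {V : Type*} [NormedAddCommGroup V] [InnerProductSpace ℝ V]
    (Φ : Set V) : Prop where
  finite : Φ.Finite
  ne_zero : ∀ α ∈ Φ, α ≠ 0
  neg_mem : ∀ α ∈ Φ, -α ∈ Φ
  reflect_mem : ∀ α ∈ Φ, ∀ β ∈ Φ, β - pairing β α • α ∈ Φ
  crystal : ∀ α ∈ Φ, ∀ β ∈ Φ, ∃ n : ℤ, pairing β α = n
  reduced : ∀ α ∈ Φ, ∀ t : ℝ, t • α ∈ Φ → t = 1 ∨ t = -1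

/-- Irreducibility of a root system: no nontrivial orthogonal decomposition. -/
def IsIrreducibleRS {V : Type*} [NormedAddCommGroup V] [InnerProductSpace ℝ V]
    (Φ : Set V) : Prop :=
  ∀ Φ₁ Φ₂ : Set V, Φ = Φ₁ ∪ Φ₂ → (∀ α ∈ Φ₁, ∀ β ∈ Φ₂, ⟪α, β⟫ = 0) → Φ₁ = ∅ ∨ Φ₂ = ∅

/-- A set of roots is strongly orthogonal if for any two distinct elements neither the sum
nor the difference is a root. -/
def StronglyOrthogonal {V : Type*} [NormedAddCommGroup V] [InnerProductSpace ℝ V]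
    (Φ : Set V) (S : Set V) : Prop :=
  ∀ α ∈ S, ∀ β ∈ S, α ≠ β → α + β ∉ Φ ∧ α - β ∉ Φ

/-- A set of pairwise orthogonal vectors. -/
def OrthogonalSet {V : Type*} [NormedAddCommGroup V] [InnerProductSpace ℝ V]
    (S : Set V) : Prop :=
  ∀ α ∈ S, ∀ β ∈ S, α ≠ β → ⟪α, β⟫ = 0

/-- The standard basis vector `ε_i` of `ℝ^n`. -/
noncomputable def eps (n : ℕ) (i : Fin n) : EuclideanSpace ℝ (Fin n) :=
  EuclideanSpace.single i (1 : ℝ)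

/-- The root system of type `A_{n-1}` in ε-coordinates. -/
def typeA (n : ℕ) : Set (EuclideanSpace ℝ (Fin n)) :=
  {v | ∃ i j : Fin n, i ≠ j ∧ v = eps n i - eps n j}

/-- The root system of type `C_n` in ε-coordinates. -/
def typeC (n : ℕ) : Set (EuclideanSpace ℝ (Fin n)) :=
  {v | (∃ i j : Fin n, i ≠ j ∧
         (v = eps n i - eps n j ∨ v = eps n i + eps n j ∨ v = -(eps n i + eps n j))) ∨
       (∃ i : Fin n, v = (2 : ℝ) • eps n i ∨ v = -((2 : ℝ) • eps n i))}

lemma memC_iff (n : ℕ) (v : EuclideanSpace ℝ (Fin n)) :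
    v ∈ typeC n ↔ ∃ (i j : Fin n) (s t : ℝ),
      (s = 1 ∨ s = -1) ∧ (t = 1 ∨ t = -1) ∧ (i = j → s = t) ∧
      v = s • eps n i + t • eps n j := by
  constructor
  · rintro (⟨i, j, hij, h | h | h⟩ | ⟨i, h | h⟩)
    · exact ⟨i, j, 1, -1, Or.inl rfl, Or.inr rfl, fun h => absurd h hij, by rw [h]; module⟩
    · exact ⟨i, j, 1, 1, Or.inl rfl, Or.inl rfl, fun _ => rfl, by rw [h]; module⟩
    · exact ⟨i, j, -1, -1, Or.inr rfl, Or.inr rfl, fun _ => rfl, by rw [h]; module⟩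
    · exact ⟨i, i, 1, 1, Or.inl rfl, Or.inl rfl, fun _ => rfl, by rw [h]; module⟩
    · exact ⟨i, i, -1, -1, Or.inr rfl, Or.inr rfl, fun _ => rfl, by rw [h]; module⟩
  · rintro ⟨i, j, s, t, hs, ht, hst, rfl⟩
    by_cases hij : i = j
    · subst hij
      rcases hs with rfl | rfl
      · exact Or.inr ⟨i, Or.inl (by rw [← hst rfl]; module)⟩
      · exact Or.inr ⟨i, Or.inr (by rw [← hst rfl]; module)⟩
    · rcases hs with rfl | rfl <;> rcases ht with rfl | rfl
      · exact Or.inl ⟨i, j, hij, Or.inr (Or.inl (by module))⟩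
      · exact Or.inl ⟨i, j, hij, Or.inl (by module)⟩
      · exact Or.inl ⟨j, i, Ne.symm hij, Or.inl (by module)⟩
      · exact Or.inl ⟨i, j, hij, Or.inr (Or.inr (by module))⟩

lemma longC (n : ℕ) (c : ℝ) (hc : c = 1 ∨ c = -1) (a : Fin n)
    (v : EuclideanSpace ℝ (Fin n)) (h : v = (2 * c) • eps n a) : v ∈ typeC n := by
  rcases hc with rfl | rfl
  · exact Or.inr ⟨a, Or.inl (by rw [h]; module)⟩
  · exact Or.inr ⟨a, Or.inr (by rw [h]; module)⟩

lemma shortC (n : ℕ) (j q : Fin n) (hjq : j ≠ q) (t u : ℝ)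
    (ht : t = 1 ∨ t = -1) (hu : u = 1 ∨ u = -1)
    (v : EuclideanSpace ℝ (Fin n)) (h : v = t • eps n j + u • eps n q) : v ∈ typeC n :=
  (memC_iff n v).mpr ⟨j, q, t, u, ht, hu, fun h' => absurd h' hjq, h⟩

lemma keyC (n : ℕ) (i j q : Fin n) (s t s' t' : ℝ)
    (hs : s = 1 ∨ s = -1) (ht : t = 1 ∨ t = -1) (hs' : s' = 1 ∨ s' = -1)
    (ht' : t' = 1 ∨ t' = -1) :
    s • eps n i + t • eps n j + (s' • eps n i + t' • eps n q) ∈ typeC n ∨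
    s • eps n i + t • eps n j - (s' • eps n i + t' • eps n q) ∈ typeC n ∨
    s' • eps n i + t' • eps n q = s • eps n i + t • eps n j ∨
    s' • eps n i + t' • eps n q = -(s • eps n i + t • eps n j) := by
  by_cases hss : s' = s
  · subst hss
    by_cases hjq : j = q
    · subst hjq
      by_cases htt : t' = t
      · subst htt; right; right; left; rfl
      · have ht2 : t' = -t := by
          rcases ht with rfl | rfl <;> rcases ht' with rfl | rfl <;> norm_num at *
        subst ht2
        left; exact longC n s' hs i _ (by module)
    · right; left
      exact shortC n j q hjq t (-t') ht (by rcases ht' with rfl | rfl <;> norm_num) _ (by module)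
  · have hss2 : s' = -s := by
      rcases hs with rfl | rfl <;> rcases hs' with rfl | rfl <;> norm_num at *
    subst hss2
    by_cases hjq : j = q
    · subst hjq
      by_cases htt : t' = -t
      · subst htt; right; right; right; module
      · have ht2 : t' = t := by
          rcases ht with rfl | rfl <;> rcases ht' with rfl | rfl <;> norm_num at *
        subst ht2
        right; left; exact longC n s hs i _ (by module)
    · left
      exact shortC n j q hjq t t' ht ht' _ (by module)

lemma coordCsupp (n : ℕ) (s t : ℝ) (i j u : Fin n) (h : (s • eps n i + t • eps n j) u ≠ 0) :
    u = i ∨ u = j := by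
  by_contra h'
  push_neg at h'
  exact h (by simp [eps, EuclideanSpace.single_apply, h'.1, h'.2])

lemma commonC (n : ℕ) (α α' : EuclideanSpace ℝ (Fin n)) (hα : α ∈ typeC n) (hα' : α' ∈ typeC n)
    (u : Fin n) (h1 : α u ≠ 0) (h2 : α' u ≠ 0) :
    α + α' ∈ typeC n ∨ α - α' ∈ typeC n ∨ α' = α ∨ α' = -α := by
  obtain ⟨i, j, s, t, hs, ht, _, rfl⟩ := (memC_iff n α).mp hα
  obtain ⟨p, q, s', t', hs', ht', _, rfl⟩ := (memC_iff n α').mp hα'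
  rcases coordCsupp n s t i j u h1 with rfl | rfl <;>
    rcases coordCsupp n s' t' p q u h2 with rfl | rfl
  · exact keyC n u j q s t s' t' hs ht hs' ht'
  · rw [add_comm (s' • eps n p) (t' • eps n u)]
    exact keyC n u j p s t t' s' hs ht ht' hs'
  · rw [add_comm (s • eps n i) (t • eps n u)]
    exact keyC n u i q t s s' t' ht hs hs' ht'
  · rw [add_comm (s • eps n i) (t • eps n u), add_comm (s' • eps n p) (t' • eps n u)]
    exact keyC n u i p t s t' s' ht hs ht' hs'

lemma coordAsupp (n : ℕ) (i j u : Fin n) (h : (eps n i - eps n j) u ≠ 0) : u = i ∨ u = j := by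
  by_contra h'
  push_neg at h'
  exact h (by simp [eps, EuclideanSpace.single_apply, h'.1, h'.2])

lemma commonA (n : ℕ) (α α' : EuclideanSpace ℝ (Fin n)) (hα : α ∈ typeA n) (hα' : α' ∈ typeA n)
    (u : Fin n) (h1 : α u ≠ 0) (h2 : α' u ≠ 0) :
    α + α' ∈ typeA n ∨ α - α' ∈ typeA n ∨ α' = α ∨ α' = -α := by
  obtain ⟨i, j, hij, rfl⟩ := hα
  obtain ⟨p, q, hpq, rfl⟩ := hα'
  rcases coordAsupp n i j u h1 with rfl | rfl <;> rcases coordAsupp n p q u h2 with h | h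
  · -- u = i = p
    subst h
    by_cases hjq : j = q
    · subst hjq; right; right; left; rfl
    · right; left; exact ⟨q, j, fun h => hjq h.symm, by module⟩
  · -- u = i = q
    subst h
    by_cases hpj : p = j
    · subst hpj; right; right; right; module
    · left; exact ⟨p, j, hpj, by module⟩
  · -- u = j = p
    subst h
    by_cases hqi : q = i
    · subst hqi; right; right; right; module
    · left; exact ⟨i, q, fun h => hqi h.symm, by module⟩
  · -- u = j = q
    subst h
    by_cases hpi : p = i
    · subst hpi; right; right; left; rfl
    · right; left; exact ⟨i, p, fun h => hpi h.symm, by module⟩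

lemma disj (n : ℕ) (Φ : Set (EuclideanSpace ℝ (Fin n))) (hΦ : Φ = typeA n ∨ Φ = typeC n)
    (α α' : EuclideanSpace ℝ (Fin n)) (hα : α ∈ Φ) (hα' : α' ∈ Φ)
    (hne : α' ≠ α) (hneg : α' ≠ -α) (hsum : α + α' ∉ Φ) (hdiff : α - α' ∉ Φ)
    (u : Fin n) (h1 : α u ≠ 0) : α' u = 0 := by
  by_contra h2
  rcases hΦ with rfl | rfl
  · rcases commonA n α α' hα hα' u h1 h2 with h | h | h | h <;> tauto
  · rcases commonC n α α' hα hα' u h1 h2 with h | h | h | h <;> tauto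

lemma meets (n : ℕ) (x y : EuclideanSpace ℝ (Fin n)) (h : ⟪x, y⟫ ≠ 0) :
    ∃ u, x u ≠ 0 ∧ y u ≠ 0 := by
  by_contra h'
  push_neg at h'
  apply h
  rw [show ⟪x, y⟫ = ∑ u, x u * y u by simp [PiLp.inner_apply, RCLike.inner_apply, mul_comm]]
  apply Finset.sum_eq_zero
  intro u _
  by_cases hx : x u = 0
  · rw [hx, zero_mul]
  · rw [h' u hx, mul_zero]

lemma suppΦ (n : ℕ) (Φ : Set (EuclideanSpace ℝ (Fin n))) (hΦ : Φ = typeA n ∨ Φ = typeC n)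
    (v : EuclideanSpace ℝ (Fin n)) (hv : v ∈ Φ) :
    ∃ a b, ∀ u, v u ≠ 0 → u = a ∨ u = b := by
  rcases hΦ with rfl | rfl
  · obtain ⟨i, j, _, rfl⟩ := hv
    exact ⟨i, j, fun u hu => coordAsupp n i j u hu⟩
  · obtain ⟨i, j, s, t, _, _, _, rfl⟩ := (memC_iff n v).mp hv
    exact ⟨i, j, fun u hu => coordCsupp n s t i j u hu⟩

lemma inner_eps_eps (n : ℕ) (i j : Fin n) : ⟪eps n i, eps n j⟫ = if i = j then 1 else 0 := by
  simp only [eps, EuclideanSpace.inner_single_right, EuclideanSpace.single_apply,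
    RCLike.inner_apply, starRingEnd_apply, star_one, mul_one, one_mul]
  simp [eq_comm]

lemma innA (n : ℕ) (v : EuclideanSpace ℝ (Fin n)) (hv : v ∈ typeA n) : ⟪v, v⟫ = 2 := by
  obtain ⟨i, j, hij, rfl⟩ := hv
  simp only [inner_sub_left, inner_sub_right, inner_eps_eps]
  simp [hij, hij.symm]
  norm_num

lemma innC (n : ℕ) (v : EuclideanSpace ℝ (Fin n)) (hv : v ∈ typeC n) :
    ⟪v, v⟫ = 2 ∨ ⟪v, v⟫ = 4 := by
  rcases hv with ⟨i, j, hij, rfl | rfl | rfl⟩ | ⟨i, rfl | rfl⟩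
  · left
    simp only [inner_sub_left, inner_sub_right, inner_eps_eps]
    simp [hij, hij.symm]; norm_num
  · left
    simp only [inner_add_left, inner_add_right, inner_eps_eps]
    simp [hij, hij.symm]; norm_num
  · left
    simp only [inner_neg_left, inner_neg_right, inner_add_left, inner_add_right, inner_eps_eps]
    simp [hij, hij.symm]; norm_num
  · right
    simp only [real_inner_smul_left, real_inner_smul_right, inner_eps_eps]
    simp; norm_num
  · right
    simp only [inner_neg_left, inner_neg_right, real_inner_smul_left, real_inner_smul_right,
      inner_eps_eps]
    simp; norm_num

lemma inner_eps_right (n : ℕ) (x : EuclideanSpace ℝ (Fin n)) (a : Fin n) :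
    ⟪x, eps n a⟫ = x a := by
  simp [eps, EuclideanSpace.inner_single_right]

/-- in types `A` and `C`, if `β_1, …, β_k` are pairwise strongly orthogonal roots
with `(β_i, γ) > 0` for all `i`, then `k ≤ 2`; moreover if `k = 2` and `{γ, β_1, β_2}` contains
roots of different lengths, then `γ` is a short root. -/
theorem stmt3 (n k : ℕ) (Φ : Set (EuclideanSpace ℝ (Fin n)))
    (hΦ : Φ = typeA n ∨ Φ = typeC n)
    (γ : EuclideanSpace ℝ (Fin n)) (hγ : γ ∈ Φ)
    (β : Fin k → EuclideanSpace ℝ (Fin n)) (hβ : ∀ i, β i ∈ Φ)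
    (hinj : Function.Injective β)
    (hso : ∀ i j : Fin k, i ≠ j → β i + β j ∉ Φ ∧ β i - β j ∉ Φ)
    (hpos : ∀ i, 0 < ⟪β i, γ⟫) :
    k ≤ 2 ∧ ∀ (hk : k = 2),
      ¬(‖β ⟨0, by omega⟩‖ = ‖γ‖ ∧ ‖β ⟨1, by omega⟩‖ = ‖γ‖) →
      ∀ α ∈ Φ, ‖γ‖ ≤ ‖α‖ := by
  have hneq : ∀ i j : Fin k, i ≠ j → β j ≠ -β i := by
    intro i j hij h
    have h1 := hpos i
    have h2 := hpos j
    rw [h, inner_neg_left] at h2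
    linarith
  have key : ∀ i j : Fin k, i ≠ j → ∀ u, β i u ≠ 0 → β j u ≠ 0 → False := by
    intro i j hij u h1 h2
    exact h2 (disj n Φ hΦ (β i) (β j) (hβ i) (hβ j)
      (fun h => hij (hinj h).symm) (hneq i j hij) (hso i j hij).1 (hso i j hij).2 u h1)
  have hmeet : ∀ i : Fin k, ∃ u, β i u ≠ 0 ∧ γ u ≠ 0 := fun i =>
    meets n (β i) γ (hpos i).ne'
  constructor
  · by_contra hk
    push_neg at hk
    have h0 : (0 : ℕ) < k := by omega
    have h1 : (1 : ℕ) < k := by omega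
    have h2 : (2 : ℕ) < k := by omega
    obtain ⟨a, b, hab⟩ := suppΦ n Φ hΦ γ hγ
    obtain ⟨u0, hu0, hg0⟩ := hmeet ⟨0, h0⟩
    obtain ⟨u1, hu1, hg1⟩ := hmeet ⟨1, h1⟩
    obtain ⟨u2, hu2, hg2⟩ := hmeet ⟨2, h2⟩
    have n01 : (⟨0, h0⟩ : Fin k) ≠ ⟨1, h1⟩ := by simp [Fin.ext_iff]
    have n02 : (⟨0, h0⟩ : Fin k) ≠ ⟨2, h2⟩ := by simp [Fin.ext_iff]
    have n12 : (⟨1, h1⟩ : Fin k) ≠ ⟨2, h2⟩ := by simp [Fin.ext_iff]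
    rcases hab u0 hg0 with rfl | rfl <;> rcases hab u1 hg1 with h | h <;>
      rcases hab u2 hg2 with h' | h' <;>
      first
        | exact key _ _ n01 u0 hu0 (h ▸ hu1)
        | exact key _ _ n02 u0 hu0 (h' ▸ hu2)
        | exact key _ _ n12 _ (h ▸ hu1) (h' ▸ hu2)
  · intro hk _ α hα
    subst hk
    have n01 : (⟨0, by omega⟩ : Fin 2) ≠ ⟨1, by omega⟩ := by simp [Fin.ext_iff]
    rcases hΦ with rfl | rfl
    · rw [norm_eq_sqrt_real_inner, norm_eq_sqrt_real_inner, innA n γ hγ, innA n α hα]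
    · have hγ2 : ⟪γ, γ⟫ = 2 := by
        rcases hγ with ⟨i, j, hij, hf | hf | hf⟩ | ⟨c, hc⟩
        · subst hf
          simp only [inner_sub_left, inner_sub_right, inner_eps_eps]
          simp [hij, hij.symm]; norm_num
        · subst hf
          simp only [inner_add_left, inner_add_right, inner_eps_eps]
          simp [hij, hij.symm]; norm_num
        · subst hf
          simp only [inner_neg_left, inner_neg_right, inner_add_left, inner_add_right,
            inner_eps_eps]
          simp [hij, hij.symm]; norm_num
        · exfalso
          have hcoord : ∀ m : Fin 2, β m c ≠ 0 := by
            intro m hm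
            have hp := hpos m
            rcases hc with rfl | rfl
            · rw [real_inner_smul_right, inner_eps_right, hm] at hp
              norm_num at hp
            · rw [inner_neg_right, real_inner_smul_right, inner_eps_right, hm] at hp
              norm_num at hp
          exact key _ _ n01 c (hcoord _) (hcoord _)
      rw [norm_eq_sqrt_real_inner, norm_eq_sqrt_real_inner, hγ2]
      apply Real.sqrt_le_sqrt
      rcases innC n α hα with h | h <;> rw [h] <;> norm_num
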